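/- arXiv:2102.05858 — 5 statements merged into one kernel-verified Lean document; each statement's English description precedes it below -/
import Mathlib

section
/- Let X be a finite subset of ℝ^d that spans ℝ^d, let p_X be the uniform distribution on X, let G be a nonempty subset of X, and let κ ∈ (0, 1/2]. Then there exists a probability distribution q supported on G such that, writing q^{G,κ} = κ·p_X + (1−κ)·q (a distribution on X), the matrix S(q^{G,κ}) = Σ_{x∈X} q^{G,κ}_x x xᵀ is invertible and xᵀ S(q^{G,κ})^{-1} x ≤ 2d for every x ∈ G. -/
open Finset Matrix

/-- `Smat X p` is the matrix `S(p) = ∑_{x ∈ X} p_x · x xᵀ`. -/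
noncomputable def Smat {d : ℕ} (X : Finset (Fin d → ℝ)) (p : (Fin d → ℝ) → ℝ) :
    Matrix (Fin d) (Fin d) ℝ :=
  ∑ x ∈ X, p x • Matrix.vecMulVec x x

lemma smat_mulVec {d : ℕ} (X : Finset (Fin d → ℝ)) (p : (Fin d → ℝ) → ℝ) (v : Fin d → ℝ) :
    (Smat X p) *ᵥ v = ∑ x ∈ X, (p x * (x ⬝ᵥ v)) • x := by
  funext i
  simp only [Matrix.mulVec, dotProduct, Smat, Finset.sum_apply, Matrix.sum_apply,
    Matrix.smul_apply, Matrix.vecMulVec_apply, smul_eq_mul, Pi.smul_apply]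
  simp_rw [Finset.sum_mul]
  rw [Finset.sum_comm]
  refine Finset.sum_congr rfl fun x _ => ?_
  rw [Finset.mul_sum, Finset.sum_mul]
  exact Finset.sum_congr rfl fun j _ => by ring

lemma smat_quad {d : ℕ} (X : Finset (Fin d → ℝ)) (p : (Fin d → ℝ) → ℝ) (v : Fin d → ℝ) :
    v ⬝ᵥ ((Smat X p) *ᵥ v) = ∑ x ∈ X, p x * (x ⬝ᵥ v) ^ 2 := by
  rw [smat_mulVec]
  show ∑ j, v j * ((∑ x ∈ X, (p x * (x ⬝ᵥ v)) • x) j) = _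
  simp only [Finset.sum_apply, Pi.smul_apply, smul_eq_mul]
  simp_rw [Finset.mul_sum]
  rw [Finset.sum_comm]
  refine Finset.sum_congr rfl fun x _ => ?_
  have hc : x ⬝ᵥ v = ∑ j, x j * v j := rfl
  calc ∑ j, v j * ((p x * (x ⬝ᵥ v)) * x j)
      = (p x * (x ⬝ᵥ v)) * ∑ j, x j * v j := by
        rw [Finset.mul_sum]; exact Finset.sum_congr rfl fun j _ => by ring
    _ = p x * (x ⬝ᵥ v) ^ 2 := by rw [← hc]; ring

lemma smat_isHermitian {d : ℕ} (X : Finset (Fin d → ℝ)) (p : (Fin d → ℝ) → ℝ) :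
    (Smat X p).IsHermitian := by
  unfold Matrix.IsHermitian
  ext i j
  simp only [Smat, Matrix.conjTranspose_apply, Matrix.sum_apply, Matrix.smul_apply,
    Matrix.vecMulVec_apply, smul_eq_mul, star_trivial]
  exact Finset.sum_congr rfl fun x _ => by ring

lemma smat_posDef {d : ℕ} (X : Finset (Fin d → ℝ))
    (hspan : Submodule.span ℝ (↑X : Set (Fin d → ℝ)) = ⊤)
    (p : (Fin d → ℝ) → ℝ) (hp : ∀ x ∈ X, 0 < p x) : (Smat X p).PosDef := by
  refine Matrix.PosDef.of_dotProduct_mulVec_pos (smat_isHermitian X p) fun v hv => ?_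
  rw [star_trivial, smat_quad]
  have hex : ∃ x ∈ X, x ⬝ᵥ v ≠ 0 := by
    by_contra h
    push_neg at h
    let f : (Fin d → ℝ) →ₗ[ℝ] ℝ :=
      { toFun := fun w => w ⬝ᵥ v
        map_add' := fun a b => add_dotProduct a b v
        map_smul' := fun r a => smul_dotProduct r a v }
    have hle : Submodule.span ℝ (↑X : Set (Fin d → ℝ)) ≤ LinearMap.ker f :=
      Submodule.span_le.2 (fun x hx => LinearMap.mem_ker.2 (h x hx))
    rw [hspan] at hle
    have hv0 : v ⬝ᵥ v = 0 := hle (Submodule.mem_top)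
    exact hv (dotProduct_self_eq_zero.mp hv0)
  obtain ⟨x0, hx0X, hx0⟩ := hex
  refine Finset.sum_pos' (fun x hx => mul_nonneg (hp x hx).le (sq_nonneg _)) ⟨x0, hx0X, ?_⟩
  exact mul_pos (hp x0 hx0X) (by positivity)

lemma trace_mul_vecMulVec {d : ℕ} (B : Matrix (Fin d) (Fin d) ℝ) (x : Fin d → ℝ) :
    (B * Matrix.vecMulVec x x).trace = x ⬝ᵥ (B *ᵥ x) := by
  simp only [Matrix.trace, Matrix.diag_apply, Matrix.mul_apply, Matrix.vecMulVec_apply,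
    dotProduct, Matrix.mulVec, Finset.mul_sum]
  refine Finset.sum_congr rfl fun i _ => Finset.sum_congr rfl fun j _ => by ring


/-- existence of a distribution `q` supported on `G ⊆ X` such that the mixture
`q^{G,κ} = κ · p_X + (1 − κ) · q` with the uniform distribution `p_X` on `X` has
`S(q^{G,κ})` invertible and `xᵀ S(q^{G,κ})⁻¹ x ≤ 2d` for all `x ∈ G`. -/
theorem exists_d_distribution {d : ℕ} (X : Finset (Fin d → ℝ))
    (hspan : Submodule.span ℝ (↑X : Set (Fin d → ℝ)) = ⊤)
    (G : Finset (Fin d → ℝ)) (hG : G ⊆ X) (hGne : G.Nonempty)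
    (κ : ℝ) (hκ0 : 0 < κ) (hκ : κ ≤ 1 / 2) :
    ∃ q : (Fin d → ℝ) → ℝ,
      (∀ x ∈ X, 0 ≤ q x) ∧ (∑ x ∈ X, q x = 1) ∧ (∀ x, x ∉ G → q x = 0) ∧
      IsUnit (Smat X (fun x => κ * (1 / (X.card : ℝ)) + (1 - κ) * q x)) ∧
      ∀ x ∈ G,
        dotProduct x
            ((Smat X (fun x => κ * (1 / (X.card : ℝ)) + (1 - κ) * q x))⁻¹.mulVec x)
          ≤ 2 * d := by
  classical
  have hXne : X.Nonempty := hGne.mono hG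
  have hXcard : (0 : ℝ) < X.card := by exact_mod_cast Finset.card_pos.2 hXne
  set c : ℝ := κ * (1 / (X.card : ℝ)) with hc
  have hcpos : 0 < c := by positivity
  have hκ1 : (0 : ℝ) < 1 - κ := by linarith
  set A : Matrix (Fin d) (Fin d) ℝ := Smat X (fun _ => c) with hA
  set T : (Fin d → ℝ) → Matrix (Fin d) (Fin d) ℝ := fun x => Matrix.vecMulVec x x with hT
  -- weight function from a point of the simplex
  set qf : (↥G → ℝ) → (Fin d → ℝ) → ℝ :=
    fun w x => if h : x ∈ G then w ⟨x, h⟩ else 0 with hqf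
  set F : (↥G → ℝ) → Matrix (Fin d) (Fin d) ℝ :=
    fun w => A + (1 - κ) • ∑ g : ↥G, w g • T ↑g with hF
  have hFS : ∀ w : ↥G → ℝ, Smat X (fun x => c + (1 - κ) * qf w x) = F w := by
    intro w
    have h1 : Smat X (fun x => c + (1 - κ) * qf w x)
        = A + ∑ x ∈ X, ((1 - κ) * qf w x) • T x := by
      rw [hA]; unfold Smat; rw [← Finset.sum_add_distrib]
      exact Finset.sum_congr rfl fun x _ => by rw [add_smul]
    have h2 : ∑ x ∈ X, ((1 - κ) * qf w x) • T x = (1 - κ) • ∑ x ∈ G, qf w x • T x := by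
      rw [Finset.smul_sum, ← Finset.sum_subset hG]
      · exact Finset.sum_congr rfl fun x _ => by rw [mul_smul]
      · intro x hxX hxG
        simp [hqf, hxG]
    have h3 : ∑ x ∈ G, qf w x • T x = ∑ g : ↥G, w g • T ↑g := by
      rw [← Finset.sum_coe_sort G (fun x => qf w x • T x)]
      exact Finset.sum_congr rfl fun g _ => by simp [hqf, g.2]
    rw [h1, h2, h3, hF]
  -- every simplex point gives a positive-definite matrix
  have hpos : ∀ w ∈ stdSimplex ℝ (↥G), (F w).PosDef := by
    intro w hw
    rw [← hFS]
    refine smat_posDef X hspan _ fun x hx => ?_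
    have hq0 : 0 ≤ qf w x := by
      by_cases h : x ∈ G
      · simp only [hqf, dif_pos h]; exact hw.1 _
      · simp [hqf, h]
    nlinarith
  -- maximize the determinant over the simplex
  have hKne : (stdSimplex ℝ (↥G)).Nonempty := by
    obtain ⟨g0, hg0⟩ := hGne
    have : Nonempty ↥G := ⟨⟨g0, hg0⟩⟩
    have hcard : (0 : ℝ) < (Fintype.card ↥G : ℝ) := by
      exact_mod_cast Fintype.card_pos (α := ↥G)
    refine ⟨fun _ => (Fintype.card ↥G : ℝ)⁻¹, fun _ => by positivity, ?_⟩
    rw [Finset.sum_const, Finset.card_univ, nsmul_eq_mul, mul_inv_cancel₀ hcard.ne']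
  have hcont : Continuous fun w : ↥G → ℝ => (F w).det := by
    refine Continuous.matrix_det ?_
    refine continuous_const.add (Continuous.const_smul (g := fun w : ↥G → ℝ => ∑ g : ↥G, w g • T ↑g) ?_ (1 - κ))
    exact continuous_finset_sum _ fun g _ => (continuous_apply g).smul continuous_const
  obtain ⟨w₀, hw₀K, hmax⟩ :=
    (isCompact_stdSimplex ℝ (↥G)).exists_isMaxOn hKne hcont.continuousOn
  set S : Matrix (Fin d) (Fin d) ℝ := F w₀ with hSdef
  have hS : S.PosDef := hpos w₀ hw₀K
  have hSdetu : IsUnit S.det := hS.det_pos.ne'.isUnit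
  have hSinv : S⁻¹.PosSemidef := hS.inv.posSemidef
  -- the key first-order inequality
  have claim : ∀ g : ↥G, (1 - κ) * ((g : Fin d → ℝ) ⬝ᵥ (S⁻¹ *ᵥ ↑g)) ≤ (d : ℝ) := by
    intro g
    set N : Matrix (Fin d) (Fin d) ℝ := A + (1 - κ) • T ↑g with hN
    set C : Matrix (Fin d) (Fin d) ℝ := S⁻¹ * (N - S) with hC
    set P : Polynomial ℝ :=
      ((1 + (Polynomial.X : Polynomial ℝ) • C.map Polynomial.C).det).divX.divX with hP
    have key : ∀ t ∈ Set.Ioc (0 : ℝ) 1, C.trace + P.eval t * t ≤ 0 := by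
      intro t ht
      set e : ↥G → ℝ := fun g' => if g' = g then 1 else 0 with he
      set wt : ↥G → ℝ := fun g' => (1 - t) * w₀ g' + t * e g' with hwt
      have hwtK : wt ∈ stdSimplex ℝ (↥G) := by
        constructor
        · intro g'
          have h1 := hw₀K.1 g'
          have h2 : (0 : ℝ) ≤ e g' := by by_cases h : g' = g <;> simp [he, h]
          have h3 := ht.1.le
          have h4 := ht.2
          simp only [hwt]
          nlinarith
        · have hse : ∑ g' : ↥G, e g' = 1 := by simp [he]
          simp only [hwt]
          rw [Finset.sum_add_distrib, ← Finset.mul_sum, ← Finset.mul_sum, hse, hw₀K.2]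
          ring
      have hFwt : F wt = (1 - t) • S + t • N := by
        have hsum : ∑ g' : ↥G, ((1 - t) * w₀ g' + t * e g') • T ↑g'
            = (1 - t) • (∑ g' : ↥G, w₀ g' • T ↑g') + t • (∑ g' : ↥G, e g' • T ↑g') := by
          rw [Finset.smul_sum, Finset.smul_sum, ← Finset.sum_add_distrib]
          exact Finset.sum_congr rfl fun g' _ => by
            rw [add_smul, mul_smul, mul_smul]
        have hesum : ∑ g' : ↥G, e g' • T ↑g' = T ↑g := by
          simp [he]
        have e1 : F wt = A + (1 - κ) • ∑ g' : ↥G, wt g' • T ↑g' := rfl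
        have e2 : S = A + (1 - κ) • ∑ g' : ↥G, w₀ g' • T ↑g' := rfl
        have e3 : ∀ g', wt g' = (1 - t) * w₀ g' + t * e g' := fun _ => rfl
        rw [e1, e2, hN]
        simp only [e3]
        rw [hsum, hesum]
        module
      have hfac : (1 - t) • S + t • N = S * (1 + t • C) := by
        rw [Matrix.mul_add, Matrix.mul_one, Matrix.mul_smul, hC, ← Matrix.mul_assoc,
          Matrix.mul_nonsing_inv S hSdetu, Matrix.one_mul]
        module
      have h : (F wt).det ≤ (F w₀).det := hmax hwtK
      rw [← hSdef, hFwt, hfac, Matrix.det_mul, Matrix.det_one_add_smul, ← hP] at h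
      have hle : 1 + C.trace * t + P.eval t * t ^ 2 ≤ 1 := by
        have := le_of_mul_le_mul_left (le_of_le_of_eq h (mul_one S.det).symm) hS.det_pos
        simpa using this
      nlinarith [ht.1]
    have htr : C.trace ≤ 0 := by
      have hcont2 : Continuous fun t : ℝ => C.trace + P.eval t * t :=
        continuous_const.add ((P.continuous).mul continuous_id)
      have htend : Filter.Tendsto (fun t : ℝ => C.trace + P.eval t * t)
          (nhdsWithin 0 (Set.Ioi 0)) (nhds (C.trace + P.eval 0 * 0)) :=
        (hcont2.tendsto 0).mono_left nhdsWithin_le_nhds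
      rw [mul_zero, add_zero] at htend
      refine le_of_tendsto htend ?_
      filter_upwards [Ioc_mem_nhdsGT one_pos] with t ht using key t ht
    have htrC : C.trace = (S⁻¹ * N).trace - d := by
      rw [hC, Matrix.mul_sub, Matrix.trace_sub, Matrix.nonsing_inv_mul S hSdetu,
        Matrix.trace_one]
      simp
    have htrN : (S⁻¹ * N).trace
        = (S⁻¹ * A).trace + (1 - κ) * ((g : Fin d → ℝ) ⬝ᵥ (S⁻¹ *ᵥ ↑g)) := by
      rw [hN, Matrix.mul_add, Matrix.trace_add, Matrix.mul_smul, Matrix.trace_smul, hT]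
      rw [trace_mul_vecMulVec]
      simp
    have htrA : 0 ≤ (S⁻¹ * A).trace := by
      rw [hA]
      unfold Smat
      rw [Finset.mul_sum, Matrix.trace_sum]
      refine Finset.sum_nonneg fun x _ => ?_
      rw [Matrix.mul_smul, Matrix.trace_smul, trace_mul_vecMulVec]
      have hx := hSinv.dotProduct_mulVec_nonneg x
      rw [star_trivial] at hx
      exact smul_nonneg hcpos.le hx
    linarith [htrC ▸ htr, htrN, htrA]
  -- conclude
  refine ⟨qf w₀, ?_, ?_, ?_, ?_, ?_⟩
  · intro x _
    by_cases h : x ∈ G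
    · simp only [hqf, dif_pos h]; exact hw₀K.1 _
    · simp [hqf, h]
  · rw [← Finset.sum_subset hG (fun x _ hxG => by simp [hqf, hxG])]
    rw [← Finset.sum_coe_sort G (fun x => qf w₀ x)]
    rw [← hw₀K.2]
    exact Finset.sum_congr rfl fun g _ => by simp [hqf, g.2]
  · intro x hxG
    simp [hqf, hxG]
  · rw [hFS]; exact hS.isUnit
  · intro x hx
    rw [hFS]
    have hquad : 0 ≤ x ⬝ᵥ (S⁻¹ *ᵥ x) := by
      have := hSinv.dotProduct_mulVec_nonneg x
      rwa [star_trivial] at this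
    have := claim ⟨x, hx⟩
    simp only at this
    nlinarith
end

section
/- Let X be a finite subset of ℝ^d that spans ℝ^d, let δ ∈ (0, 0.1), let t ≥ 1 be an integer, and let Δ̂ : X → [0,1] satisfy min_{x∈X} Δ̂_x = 0. Then the feasible set of OP(t, Δ̂) is nonempty, and every solution p of OP(t, Δ̂) satisfies Σ_{x∈X} p_x Δ̂_x ≤ (d·β_t + 1)/√t. -/
open Finset

section OPHelpers
open Matrix

open Finset Matrix

lemma dotProduct_sum' {d : ℕ} {ι : Type*} (s : Finset ι) (f : ι → (Fin d → ℝ))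
    (y : Fin d → ℝ) : y ⬝ᵥ (∑ i ∈ s, f i) = ∑ i ∈ s, y ⬝ᵥ f i := by
  simp only [dotProduct, Finset.sum_apply, Finset.mul_sum]
  exact Finset.sum_comm

lemma sum_mulVec' {d : ℕ} {ι : Type*} (s : Finset ι) (A : ι → Matrix (Fin d) (Fin d) ℝ)
    (y : Fin d → ℝ) : (∑ i ∈ s, A i) *ᵥ y = ∑ i ∈ s, (A i *ᵥ y) := by
  ext j
  simp only [mulVec, dotProduct, Matrix.sum_apply, Finset.sum_apply, Finset.sum_mul]
  exact Finset.sum_comm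

lemma vecMulVec_mulVec' {d : ℕ} (u y : Fin d → ℝ) :
    (vecMulVec u u) *ᵥ y = (u ⬝ᵥ y) • u := by
  ext i
  simp [vecMulVec_apply, mulVec, dotProduct, Finset.sum_mul, Finset.mul_sum, mul_comm, mul_left_comm]

lemma dot_vecMulVec {d : ℕ} (u y : Fin d → ℝ) :
    y ⬝ᵥ (vecMulVec u u) *ᵥ y = (u ⬝ᵥ y) ^ 2 := by
  rw [vecMulVec_mulVec', dotProduct_smul, smul_eq_mul, dotProduct_comm, sq]

lemma dot_sum_vecMulVec {d : ℕ} {ι : Type*} (s : Finset ι) (w : ι → ℝ)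
    (v : ι → (Fin d → ℝ)) (y : Fin d → ℝ) :
    y ⬝ᵥ (∑ i ∈ s, w i • Matrix.vecMulVec (v i) (v i)) *ᵥ y
      = ∑ i ∈ s, w i * (v i ⬝ᵥ y) ^ 2 := by
  rw [sum_mulVec', dotProduct_sum']
  refine Finset.sum_congr rfl fun i _ => ?_
  rw [smul_mulVec, dotProduct_smul, smul_eq_mul, dot_vecMulVec]

lemma sum_vecMulVec_isHermitian {d : ℕ} {ι : Type*} (s : Finset ι) (w : ι → ℝ)
    (v : ι → (Fin d → ℝ)) :
    (∑ i ∈ s, w i • Matrix.vecMulVec (v i) (v i)).IsHermitian := by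
  unfold Matrix.IsHermitian
  ext i j
  simp [conjTranspose_apply, Matrix.sum_apply, vecMulVec_apply, mul_comm]

lemma det_add_smul_vecMulVec {d : ℕ} {M : Matrix (Fin d) (Fin d) ℝ}
    (hdet : IsUnit M.det) (c : ℝ) (v : Fin d → ℝ) :
    (M + c • vecMulVec v v).det = M.det * (1 + c * (v ⬝ᵥ M⁻¹ *ᵥ v)) := by
  have hMc : M *ᵥ (c • (M⁻¹ *ᵥ v)) = c • v := by
    rw [mulVec_smul, mulVec_mulVec, Matrix.mul_nonsing_inv _ hdet, one_mulVec]
  have hcol : Matrix.replicateCol Unit (c • v) * Matrix.replicateRow Unit v = c • vecMulVec v v := by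
    ext i j
    simp [Matrix.mul_apply, Matrix.replicateCol, Matrix.replicateRow, vecMulVec_apply, mul_assoc]
  have key : M + c • vecMulVec v v
      = M * (1 + Matrix.replicateCol Unit (c • (M⁻¹ *ᵥ v)) * Matrix.replicateRow Unit v) := by
    rw [Matrix.mul_add, mul_one, ← Matrix.mul_assoc, ← Matrix.replicateCol_mulVec, hMc, hcol]
  rw [key, det_mul, Matrix.det_one_add_replicateCol_mul_replicateRow]
  congr 2
  rw [dotProduct_smul, smul_eq_mul]

lemma exists_design {d : ℕ} (hd : 0 < d) {ι : Type*} [Fintype ι] [Nonempty ι] [DecidableEq ι]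
    (v : ι → (Fin d → ℝ))
    (hv : ∀ y : Fin d → ℝ, (∀ i, v i ⬝ᵥ y = 0) → y = 0) :
    ∃ p : ι → ℝ, (∀ i, 0 ≤ p i) ∧ (∑ i, p i = 1) ∧
      (∑ i, p i • Matrix.vecMulVec (v i) (v i)).PosDef ∧
      ∀ i, v i ⬝ᵥ ((∑ j, p j • Matrix.vecMulVec (v j) (v j))⁻¹ *ᵥ (v i)) ≤ d := by
  obtain ⟨e, hde⟩ : ∃ e, d = e + 1 := ⟨d - 1, (Nat.succ_pred_eq_of_pos hd).symm⟩
  set S : (ι → ℝ) → Matrix (Fin d) (Fin d) ℝ :=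
    fun p => ∑ i, p i • Matrix.vecMulVec (v i) (v i) with hS
  have hScont : Continuous S := by
    refine continuous_finset_sum _ fun i _ => ?_
    exact (continuous_apply i).smul continuous_const
  have hfcont : Continuous fun p => (S p).det := hScont.matrix_det
  -- the uniform distribution
  have hcard : (0:ℝ) < Fintype.card ι := by
    exact_mod_cast Fintype.card_pos
  set u : ι → ℝ := fun _ => (Fintype.card ι : ℝ)⁻¹ with hu
  have huK : u ∈ stdSimplex ℝ ι := by
    constructor
    · intro i; positivity
    · simp only [hu, Finset.sum_const, Finset.card_univ, nsmul_eq_mul]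
      field_simp
  have hupos : (S u).PosDef := by
    refine Matrix.PosDef.of_dotProduct_mulVec_pos (sum_vecMulVec_isHermitian _ _ _) fun y hy => ?_
    rw [star_trivial, dot_sum_vecMulVec]
    have hterm : ∀ i ∈ Finset.univ (α := ι), 0 ≤ u i * (v i ⬝ᵥ y) ^ 2 := by
      intro i _; positivity
    obtain ⟨i0, hi0⟩ : ∃ i, v i ⬝ᵥ y ≠ 0 := by
      by_contra h
      push_neg at h
      exact hy (hv y h)
    refine Finset.sum_pos' hterm ⟨i0, Finset.mem_univ _, ?_⟩
    have : 0 < (v i0 ⬝ᵥ y) ^ 2 := by positivity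
    have : 0 < (Fintype.card ι : ℝ)⁻¹ := by positivity
    positivity
  obtain ⟨p, hpK, hpmax⟩ :=
    (isCompact_stdSimplex ℝ ι).exists_isMaxOn ⟨u, huK⟩ hfcont.continuousOn
  have hdet_pos : 0 < (S p).det := lt_of_lt_of_le hupos.det_pos (hpmax huK)
  have hpsd : (S p).PosSemidef := by
    refine Matrix.PosSemidef.of_dotProduct_mulVec_nonneg (sum_vecMulVec_isHermitian _ _ _) fun y => ?_
    rw [star_trivial, dot_sum_vecMulVec]
    exact Finset.sum_nonneg fun i _ => by
      have := hpK.1 i; positivity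
  have hdet_unit : IsUnit (S p).det := hdet_pos.ne'.isUnit
  have hppos : (S p).PosDef := by
    refine Matrix.PosDef.of_dotProduct_mulVec_pos hpsd.1 fun y hy => ?_
    refine lt_of_le_of_ne (hpsd.dotProduct_mulVec_nonneg y) ?_
    intro h
    have h0 : (S p) *ᵥ y = 0 := (hpsd.dotProduct_mulVec_zero_iff y).mp h.symm
    have : y = 0 := by
      have := congrArg (fun z => (S p)⁻¹ *ᵥ z) h0
      simpa [mulVec_mulVec, Matrix.nonsing_inv_mul _ hdet_unit, one_mulVec] using this
    exact hy this
  refine ⟨p, hpK.1, hpK.2, hppos, fun i0 => ?_⟩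
  set q : ℝ := v i0 ⬝ᵥ (S p)⁻¹ *ᵥ (v i0) with hq
  have hq0 : 0 ≤ q := by
    have := hppos.inv.posSemidef.dotProduct_mulVec_nonneg (v i0)
    simpa [hq] using this
  -- the perturbation argument
  have hkey : ∀ ε : ℝ, ε ∈ Set.Ioo (0:ℝ) 1 → q ≤ 1 + e * (1 - ε + ε * q) := by
    rintro ε ⟨hε0, hε1⟩
    have h1ε : (0:ℝ) < 1 - ε := by linarith
    set pe : ι → ℝ := fun i => (1 - ε) * p i + ε * (if i = i0 then 1 else 0) with hpe
    have hpeK : pe ∈ stdSimplex ℝ ι := by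
      constructor
      · intro i
        have h1 := hpK.1 i
        by_cases h : i = i0 <;> simp [hpe, h] <;> nlinarith [hpK.1 i0]
      · simp only [hpe]
        rw [Finset.sum_add_distrib, ← Finset.mul_sum, ← Finset.mul_sum, hpK.2,
          Finset.sum_ite_eq' Finset.univ i0 (fun _ => (1:ℝ))]
        simp
    have hSpe : S pe = (1 - ε) • S p + ε • Matrix.vecMulVec (v i0) (v i0) := by
      simp only [hS, hpe, add_smul, Finset.sum_add_distrib]
      congr 1
      · rw [Finset.smul_sum]
        exact Finset.sum_congr rfl fun i _ => by rw [smul_smul]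
      · rw [show (fun i => (ε * if i = i0 then (1:ℝ) else 0) • Matrix.vecMulVec (v i) (v i))
              = fun i => if i = i0 then ε • Matrix.vecMulVec (v i) (v i) else 0 from
            funext fun i => by by_cases h : i = i0 <;> simp [h],
          Finset.sum_ite_eq' Finset.univ i0 (fun i => ε • Matrix.vecMulVec (v i) (v i))]
        simp
    set c : ℝ := ε / (1 - ε) with hc
    have hc1 : (1 - ε) * c = ε := by
      rw [hc, mul_comm, div_mul_cancel₀ _ (ne_of_gt h1ε)]
    have hcomb : S pe = (1 - ε) • (S p + c • Matrix.vecMulVec (v i0) (v i0)) := by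
      rw [hSpe, smul_add, smul_smul, hc1]
    have hdetpe : (S pe).det = (1 - ε)^d * ((S p).det * (1 + c * q)) := by
      rw [hcomb, Matrix.det_smul, det_add_smul_vecMulVec hdet_unit, ← hq]
      simp [Fintype.card_fin]
    have hle : (S pe).det ≤ (S p).det := hpmax hpeK
    have hineq : (1 - ε)^d * (1 + c * q) ≤ 1 := by
      rw [hdetpe] at hle
      have h2 : ((1 - ε)^d * (1 + c * q)) * (S p).det ≤ 1 * (S p).det := by
        ring_nf
        ring_nf at hle
        linarith
      exact (mul_le_mul_iff_of_pos_right hdet_pos).mp h2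
    have hsplit : (1 - ε)^d * (1 + c * q) = (1 - ε)^e * (1 - ε + ε * q) := by
      rw [hde, pow_succ, mul_assoc]
      congr 1
      linear_combination q * hc1
    have hq1 : (1 - ε)^e * (1 - ε + ε * q) ≤ 1 := by rw [← hsplit]; exact hineq
    have hbern : 1 - (e:ℝ) * ε ≤ (1 - ε)^e := by
      have := one_add_mul_le_pow (a := -ε) (by linarith) e
      calc 1 - (e:ℝ) * ε = 1 + e * (-ε) := by ring
        _ ≤ (1 + -ε)^e := this
        _ = (1 - ε)^e := by ring_nf
    have hpos2 : (0:ℝ) ≤ 1 - ε + ε * q := by nlinarith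
    have h3 : (1 - (e:ℝ)*ε) * (1 - ε + ε*q) ≤ 1 :=
      le_trans (mul_le_mul_of_nonneg_right hbern hpos2) hq1
    nlinarith [h3, hε0, hq0]
  have hlim : Filter.Tendsto (fun ε : ℝ => 1 + (e:ℝ) * (1 - ε + ε * q))
      (nhdsWithin 0 (Set.Ioi 0)) (nhds (1 + (e:ℝ) * (1 - 0 + 0 * q))) := by
    apply Filter.Tendsto.mono_left _ nhdsWithin_le_nhds
    exact (continuous_const.add (continuous_const.mul
      ((continuous_const.sub continuous_id).add (continuous_id.mul continuous_const)))).tendsto 0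
  have hev : ∀ᶠ ε in nhdsWithin (0:ℝ) (Set.Ioi 0), q ≤ 1 + (e:ℝ) * (1 - ε + ε * q) := by
    filter_upwards [Ioo_mem_nhdsGT_of_mem
      (by constructor <;> norm_num : (0:ℝ) ∈ Set.Ico (0:ℝ) 1)] with ε hε
    exact hkey ε hε
  have hfin : q ≤ 1 + (e:ℝ) * (1 - 0 + 0 * q) := ge_of_tendsto hlim hev
  have : q ≤ (d:ℝ) := by
    rw [hde]
    push_cast
    linarith
  exact this

section
variable {d : ℕ} {M A B : Matrix (Fin d) (Fin d) ℝ}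

lemma symm_dot_swap (hM : M.IsHermitian) (a b : Fin d → ℝ) :
    a ⬝ᵥ M *ᵥ b = (M *ᵥ a) ⬝ᵥ b := by
  have hs : Mᵀ = M := by
    have := hM; unfold Matrix.IsHermitian at this
    simpa [Matrix.conjTranspose_eq_transpose_of_trivial] using this
  rw [dotProduct_mulVec]
  nth_rewrite 1 [← hs]
  rw [vecMul_transpose]

lemma complete_square (hM : M.PosDef) (x y : Fin d → ℝ) :
    2 * (y ⬝ᵥ x) - y ⬝ᵥ M *ᵥ y ≤ x ⬝ᵥ M⁻¹ *ᵥ x := by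
  have hdet : IsUnit M.det := hM.det_pos.ne'.isUnit
  set w := M⁻¹ *ᵥ x with hw
  have hMw : M *ᵥ w = x := by
    rw [hw, mulVec_mulVec, Matrix.mul_nonsing_inv _ hdet, one_mulVec]
  have h0 : 0 ≤ (y - w) ⬝ᵥ M *ᵥ (y - w) := by
    have := hM.posSemidef.dotProduct_mulVec_nonneg (y - w)
    simpa using this
  have hexp : (y - w) ⬝ᵥ M *ᵥ (y - w)
      = y ⬝ᵥ M *ᵥ y - 2 * (y ⬝ᵥ x) + x ⬝ᵥ M⁻¹ *ᵥ x := by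
    rw [mulVec_sub, dotProduct_sub, sub_dotProduct, sub_dotProduct]
    have h1 : w ⬝ᵥ M *ᵥ y = x ⬝ᵥ y := by rw [symm_dot_swap hM.isHermitian, hMw]
    have h2 : y ⬝ᵥ M *ᵥ w = y ⬝ᵥ x := by rw [hMw]
    have h3 : w ⬝ᵥ M *ᵥ w = x ⬝ᵥ M⁻¹ *ᵥ x := by
      rw [symm_dot_swap hM.isHermitian, hMw, dotProduct_comm]
    rw [h1, h2, h3, dotProduct_comm x y]
    ring
  linarith [h0, hexp.symm.le, hexp.le]

lemma inv_quad_mono (hB : B.PosDef) (hAH : A.IsHermitian)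
    (hle : ∀ y, y ⬝ᵥ B *ᵥ y ≤ y ⬝ᵥ A *ᵥ y) :
    A.PosDef ∧ ∀ x, x ⬝ᵥ A⁻¹ *ᵥ x ≤ x ⬝ᵥ B⁻¹ *ᵥ x := by
  have hA : A.PosDef := by
    refine Matrix.PosDef.of_dotProduct_mulVec_pos hAH fun y hy => ?_
    have := lt_of_lt_of_le (hB.dotProduct_mulVec_pos hy) (by simpa using hle y)
    simpa using this
  refine ⟨hA, fun x => ?_⟩
  have hdet : IsUnit A.det := hA.det_pos.ne'.isUnit
  set y := A⁻¹ *ᵥ x with hy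
  have hAy : A *ᵥ y = x := by
    rw [hy, mulVec_mulVec, Matrix.mul_nonsing_inv _ hdet, one_mulVec]
  have h1 : y ⬝ᵥ A *ᵥ y = x ⬝ᵥ A⁻¹ *ᵥ x := by
    rw [hAy, dotProduct_comm]
  have h2 : y ⬝ᵥ x = x ⬝ᵥ A⁻¹ *ᵥ x := by rw [dotProduct_comm]
  have := complete_square hB x y
  have hBy := hle y
  linarith

end

end OPHelpers

/-- `p` is a probability distribution on the finite set `X`. -/
def IsDistOn {d : ℕ} (X : Finset (Fin d → ℝ)) (p : (Fin d → ℝ) → ℝ) : Prop :=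
  (∀ x ∈ X, 0 ≤ p x) ∧ ∑ x ∈ X, p x = 1

/-- `β_t = 2^15 · log(t · |X| / δ)`. -/
noncomputable def betaParam (n : ℕ) (δ : ℝ) (t : ℕ) : ℝ :=
  2 ^ 15 * Real.log ((t : ℝ) * n / δ)

/-- `p` is a feasible point of the optimization problem `OP(t, Δ̂)`. -/
def FeasibleOP {d : ℕ} (X : Finset (Fin d → ℝ)) (δ : ℝ) (t : ℕ)
    (Δ : (Fin d → ℝ) → ℝ) (p : (Fin d → ℝ) → ℝ) : Prop :=
  IsDistOn X p ∧ IsUnit (Smat X p) ∧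
    ∀ x ∈ X, dotProduct x ((Smat X p)⁻¹.mulVec x) ≤
      (t : ℝ) * Δ x ^ 2 / betaParam X.card δ t + 4 * d

/-- `p` is a solution (optimal feasible point) of the optimization problem `OP(t, Δ̂)`. -/
def IsOPSolution {d : ℕ} (X : Finset (Fin d → ℝ)) (δ : ℝ) (t : ℕ)
    (Δ : (Fin d → ℝ) → ℝ) (p : (Fin d → ℝ) → ℝ) : Prop :=
  FeasibleOP X δ t Δ p ∧
    ∀ q : (Fin d → ℝ) → ℝ, FeasibleOP X δ t Δ q →
      ∑ x ∈ X, p x * Δ x ≤ ∑ x ∈ X, q x * Δ x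

set_option maxHeartbeats 1000000 in
open Matrix in
/-- the feasible set of `OP(t, Δ̂)` is nonempty, and every solution `p` of
`OP(t, Δ̂)` satisfies `∑_x p_x Δ̂_x ≤ (d·β_t + 1)/√t`. -/
theorem op_objective_bound {d : ℕ} (X : Finset (Fin d → ℝ))
    (hspan : Submodule.span ℝ (↑X : Set (Fin d → ℝ)) = ⊤)
    (δ : ℝ) (hδ0 : 0 < δ) (hδ1 : δ < 0.1)
    (t : ℕ) (ht : 1 ≤ t)
    (Δ : (Fin d → ℝ) → ℝ) (hΔ : ∀ x ∈ X, 0 ≤ Δ x ∧ Δ x ≤ 1)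
    (hΔmin : ∃ x ∈ X, Δ x = 0) :
    (∃ p : (Fin d → ℝ) → ℝ, FeasibleOP X δ t Δ p) ∧
      ∀ p : (Fin d → ℝ) → ℝ, IsOPSolution X δ t Δ p →
        ∑ x ∈ X, p x * Δ x ≤ (d * betaParam X.card δ t + 1) / Real.sqrt t := by
  classical
  obtain ⟨x₀, hx₀X, hx₀⟩ := hΔmin
  have hn1 : (1:ℝ) ≤ X.card := by exact_mod_cast Finset.card_pos.mpr ⟨x₀, hx₀X⟩
  have ht1 : (1:ℝ) ≤ t := by exact_mod_cast ht
  have htpos : (0:ℝ) < t := by linarith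
  set β := betaParam X.card δ t with hβdef
  have hβ : 0 < β := by
    rw [hβdef, betaParam]
    have harg : 1 < (t:ℝ) * X.card / δ := by
      rw [lt_div_iff₀ hδ0]
      nlinarith
    have := Real.log_pos harg
    positivity
  rcases Nat.eq_zero_or_pos d with hd0 | hd
  · -- degenerate case d = 0
    subst hd0
    set q : (Fin 0 → ℝ) → ℝ := fun y => if y = x₀ then 1 else 0 with hqdef
    have hqfeas : FeasibleOP X δ t Δ q := by
      refine ⟨⟨fun x _ => by simp only [hqdef]; split_ifs <;> norm_num, ?_⟩, ?_, ?_⟩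
      · rw [hqdef]
        rw [Finset.sum_ite_eq' X x₀ (fun _ => (1:ℝ)), if_pos hx₀X]
      · refine (Matrix.isUnit_iff_isUnit_det _).mpr ?_
        rw [Matrix.det_fin_zero]
        exact isUnit_one
      · intro x hx
        have h0 : dotProduct x ((Smat X q)⁻¹.mulVec x) = 0 := by
          simp [dotProduct]
        have h1 : 0 ≤ (t:ℝ) * Δ x ^ 2 / β := div_nonneg (by positivity) hβ.le
        rw [h0]
        simp only [Nat.cast_zero, mul_zero]
        linarith
    refine ⟨⟨q, hqfeas⟩, fun p hsol => ?_⟩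
    have hle := hsol.2 q hqfeas
    have hq0 : ∑ x ∈ X, q x * Δ x = 0 := by
      rw [hqdef]
      have : ∀ x ∈ X, (if x = x₀ then (1:ℝ) else 0) * Δ x
          = if x = x₀ then Δ x else 0 := by
        intro x _; split_ifs <;> simp
      rw [Finset.sum_congr rfl this, Finset.sum_ite_eq' X x₀ (fun x => Δ x), if_pos hx₀X, hx₀]
    have hrhs : 0 ≤ ((0:ℕ) * β + 1) / Real.sqrt t := by positivity
    simp only [Nat.cast_zero] at hrhs ⊢
    linarith [hle, hq0.le, hq0.ge, hrhs]
  · -- main case d ≥ 1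
    have hd1 : (1:ℝ) ≤ d := by exact_mod_cast hd
    have hdβt : 0 ≤ (d:ℝ) * β / t := by positivity
    set ε := Real.sqrt ((d:ℝ) * β / t) with hεdef
    have hε2 : ε^2 = (d:ℝ) * β / t := Real.sq_sqrt hdβt
    have hεpos : 0 < ε := Real.sqrt_pos.mpr (by positivity)
    set m : (Fin d → ℝ) → ℝ := fun x => max (Δ x) ε with hmdef
    have hmε : ∀ x, ε ≤ m x := fun x => le_max_right _ _
    have hmpos : ∀ x, 0 < m x := fun x => lt_of_lt_of_le hεpos (hmε x)
    have hmΔ : ∀ x, Δ x ≤ m x := fun x => le_max_left _ _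
    haveI : Nonempty {x // x ∈ X} := ⟨⟨x₀, hx₀X⟩⟩
    set v : {x // x ∈ X} → (Fin d → ℝ) := fun i => (m i.1)⁻¹ • i.1 with hvdef
    have hv : ∀ y : Fin d → ℝ, (∀ i, v i ⬝ᵥ y = 0) → y = 0 := by
      intro y hy
      have hXy : ∀ x ∈ X, x ⬝ᵥ y = 0 := by
        intro x hx
        have h2 : (m x)⁻¹ * (x ⬝ᵥ y) = 0 := by
          have := hy ⟨x, hx⟩
          rw [hvdef] at this
          simpa [smul_dotProduct] using this
        rcases mul_eq_zero.mp h2 with h | h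
        · exact absurd h (inv_ne_zero (ne_of_gt (hmpos x)))
        · exact h
      have hspan_y : ∀ z ∈ Submodule.span ℝ (X : Set (Fin d → ℝ)), z ⬝ᵥ y = 0 := by
        intro z hz
        induction hz using Submodule.span_induction with
        | mem x hx => exact hXy x hx
        | zero => simp
        | add a b _ _ ha hb => rw [add_dotProduct, ha, hb, add_zero]
        | smul c a _ ha => rw [smul_dotProduct, ha, smul_zero]
      have hyy : y ⬝ᵥ y = 0 := hspan_y y (by rw [hspan]; trivial)
      exact dotProduct_self_eq_zero.mp hyy
    obtain ⟨p', hp'0, hp'1, hp'pos, hp'bd⟩ := exists_design hd v hv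
    set S' := ∑ i, p' i • Matrix.vecMulVec (v i) (v i) with hS'
    rw [Finset.univ_eq_attach] at hp'1
    set w : (Fin d → ℝ) → ℝ :=
      fun x => if h : x ∈ X then ε^2 * p' ⟨x, h⟩ / (m x)^2 else 0 with hwdef
    have hw0 : ∀ x, 0 ≤ w x := by
      intro x
      rw [hwdef]
      dsimp only
      split_ifs with h
      · exact div_nonneg (mul_nonneg (by positivity) (hp'0 _)) (by positivity)
      · exact le_refl 0
    have hwle : ∀ i : {x // x ∈ X}, w i.1 = ε^2 * p' i / (m i.1)^2 := by
      intro i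
      rw [hwdef]
      dsimp only
      rw [dif_pos i.2, Subtype.coe_eta]
    have hterm_le : ∀ i : {x // x ∈ X}, ε^2 * p' i / (m i.1)^2 ≤ p' i := by
      intro i
      rw [div_le_iff₀ (by positivity)]
      have h1 : ε ≤ m i.1 := hmε _
      have h2 : ε * ε ≤ m i.1 * m i.1 := mul_le_mul h1 h1 hεpos.le (hmpos i.1).le
      nlinarith [hp'0 i, hεpos]
    have hsumw : ∑ x ∈ X, w x = ∑ i ∈ X.attach, ε^2 * p' i / (m i.1)^2 := by
      rw [← Finset.sum_attach X w]
      exact Finset.sum_congr rfl fun i _ => hwle i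
    have hsumw_le : ∑ x ∈ X, w x ≤ 1 := by
      rw [hsumw, ← hp'1]
      exact Finset.sum_le_sum fun i _ => hterm_le i
    set L := 1 - ∑ x ∈ X, w x with hL
    have hL0 : 0 ≤ L := by rw [hL]; linarith
    set q : (Fin d → ℝ) → ℝ := fun x => w x + (if x = x₀ then L else 0) with hqdef
    have hq0 : ∀ x, 0 ≤ q x := by
      intro x
      rw [hqdef]
      dsimp only
      split_ifs <;> [linarith [hw0 x]; simpa using hw0 x]
    have hqsum : ∑ x ∈ X, q x = 1 := by
      rw [hqdef]
      dsimp only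
      rw [Finset.sum_add_distrib, Finset.sum_ite_eq' X x₀ (fun _ => L), if_pos hx₀X, hL]
      ring
    -- matrix structure of Smat X q
    have hvmv : ∀ i : {x // x ∈ X},
        Matrix.vecMulVec (v i) (v i) = ((m i.1)^2)⁻¹ • Matrix.vecMulVec i.1 i.1 := by
      intro i
      ext a b
      rw [hvdef]
      simp only [Matrix.vecMulVec_apply, Pi.smul_apply, smul_eq_mul,
        Matrix.smul_apply]
      rw [pow_two, mul_inv]
      ring
    have hBq : Smat X q = (ε^2 • S') + L • Matrix.vecMulVec x₀ x₀ := by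
      rw [Smat, hqdef]
      simp only [add_smul]
      rw [Finset.sum_add_distrib]
      congr 1
      · rw [← Finset.sum_attach X (fun x => w x • Matrix.vecMulVec x x), hS',
          Finset.smul_sum, Finset.univ_eq_attach]
        refine Finset.sum_congr rfl fun i _ => ?_
        rw [hwle i, hvmv i, smul_smul, smul_smul]
        congr 1
      · rw [show (fun x => (if x = x₀ then L else 0) • Matrix.vecMulVec x x)
            = fun x => if x = x₀ then L • Matrix.vecMulVec x x else 0 from
            funext fun x => by split_ifs <;> simp]
        rw [Finset.sum_ite_eq' X x₀ (fun x => L • Matrix.vecMulVec x x), if_pos hx₀X]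
    -- ε² • S' is positive definite
    have hBrw : ε^2 • S' = ∑ i ∈ X.attach, (ε^2 * p' i) • Matrix.vecMulVec (v i) (v i) := by
      rw [hS', Finset.smul_sum, Finset.univ_eq_attach]
      exact Finset.sum_congr rfl fun i _ => by rw [smul_smul]
    have hBpos : (ε^2 • S').PosDef := by
      refine Matrix.PosDef.of_dotProduct_mulVec_pos ?_ ?_
      · rw [hBrw]
        exact sum_vecMulVec_isHermitian _ _ _
      · intro y hy
        have h1 : y ⬝ᵥ (ε^2 • S') *ᵥ y = ε^2 * (y ⬝ᵥ S' *ᵥ y) := by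
          rw [smul_mulVec, dotProduct_smul, smul_eq_mul]
        have h2 := hp'pos.dotProduct_mulVec_pos hy
        rw [star_trivial] at h2 ⊢
        rw [h1]
        have : (0:ℝ) < y ⬝ᵥ S' *ᵥ y := by
          rw [hS']; exact h2
        positivity
    have hSherm : (Smat X q).IsHermitian := by
      rw [Smat]
      exact sum_vecMulVec_isHermitian X q (fun x => x)
    have hcomp : ∀ y, y ⬝ᵥ (ε^2 • S') *ᵥ y ≤ y ⬝ᵥ (Smat X q) *ᵥ y := by
      intro y
      rw [hBq, add_mulVec, dotProduct_add]
      have h1 : y ⬝ᵥ (L • Matrix.vecMulVec x₀ x₀) *ᵥ y = L * (x₀ ⬝ᵥ y)^2 := by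
        rw [smul_mulVec, dotProduct_smul, smul_eq_mul, dot_vecMulVec]
      have h2 : 0 ≤ L * (x₀ ⬝ᵥ y)^2 := by positivity
      linarith [h1.le, h1.ge]
    obtain ⟨hqposdef, hqinvle⟩ := inv_quad_mono hBpos hSherm hcomp
    have hS'det : IsUnit S'.det := hp'pos.det_pos.ne'.isUnit
    haveI : Invertible (ε^2 : ℝ) := invertibleOfNonzero (by positivity)
    have hinv : ((ε^2 : ℝ) • S')⁻¹ = (ε^2)⁻¹ • S'⁻¹ := by
      refine Matrix.inv_eq_left_inv ?_
      rw [Matrix.smul_mul, Matrix.mul_smul, smul_smul,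
        inv_mul_cancel₀ (by positivity : (ε^2:ℝ) ≠ 0),
        Matrix.nonsing_inv_mul _ hS'det, one_smul]
    -- the key quadratic form bound
    have hq_bound : ∀ x (hx : x ∈ X),
        x ⬝ᵥ (Smat X q)⁻¹ *ᵥ x ≤ (ε^2)⁻¹ * ((m x)^2 * d) := by
      intro x hx
      have h1 : x ⬝ᵥ (Smat X q)⁻¹ *ᵥ x ≤ x ⬝ᵥ ((ε^2 : ℝ) • S')⁻¹ *ᵥ x := hqinvle x
      have h2 : x ⬝ᵥ ((ε^2:ℝ) • S')⁻¹ *ᵥ x = (ε^2)⁻¹ * (x ⬝ᵥ S'⁻¹ *ᵥ x) := by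
        rw [hinv, smul_mulVec, dotProduct_smul, smul_eq_mul]
      have hxv : x = m x • v ⟨x, hx⟩ := by
        rw [hvdef]
        dsimp only
        rw [smul_smul, mul_inv_cancel₀ (ne_of_gt (hmpos x)), one_smul]
      have h3 : x ⬝ᵥ S'⁻¹ *ᵥ x = (m x)^2 * (v ⟨x,hx⟩ ⬝ᵥ S'⁻¹ *ᵥ v ⟨x,hx⟩) := by
        conv_lhs => rw [hxv]
        rw [smul_dotProduct, mulVec_smul, dotProduct_smul]
        simp only [smul_eq_mul]
        ring
      have h4 : v ⟨x,hx⟩ ⬝ᵥ S'⁻¹ *ᵥ v ⟨x,hx⟩ ≤ d := hp'bd ⟨x, hx⟩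
      calc x ⬝ᵥ (Smat X q)⁻¹ *ᵥ x ≤ (ε^2)⁻¹ * ((m x)^2 * (v ⟨x,hx⟩ ⬝ᵥ S'⁻¹ *ᵥ v ⟨x,hx⟩)) := by
            rw [← h3, ← h2]; exact h1
        _ ≤ (ε^2)⁻¹ * ((m x)^2 * d) := by gcongr
    have hqfeas : FeasibleOP X δ t Δ q := by
      refine ⟨⟨fun x _ => hq0 x, hqsum⟩, hqposdef.isUnit, fun x hx => ?_⟩
      have hb := hq_bound x hx
      rcases le_or_gt ε (Δ x) with hcase | hcase
      · have hmx : m x = Δ x := by rw [hmdef]; exact max_eq_left hcase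
        have heq : (ε^2)⁻¹ * ((m x)^2 * d) = (t:ℝ) * Δ x ^ 2 / β := by
          rw [hmx, hε2]
          have hβne : β ≠ 0 := ne_of_gt hβ
          have htne : (t:ℝ) ≠ 0 := ne_of_gt htpos
          have hdne : (d:ℝ) ≠ 0 := by positivity
          field_simp
        have h4d : 0 ≤ 4 * (d:ℝ) := by positivity
        rw [heq] at hb
        exact le_trans hb (by linarith)
      · have hmx : m x = ε := by rw [hmdef]; exact max_eq_right hcase.le
        have heq : (ε^2)⁻¹ * ((m x)^2 * d) = (d:ℝ) := by
          rw [hmx]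
          field_simp
        rw [heq] at hb
        have h1 : 0 ≤ (t:ℝ) * Δ x ^ 2 / β := div_nonneg (by positivity) hβ.le
        have : (d:ℝ) ≤ 4 * d := by linarith
        linarith
    refine ⟨⟨q, hqfeas⟩, fun p hsol => ?_⟩
    have hle := hsol.2 q hqfeas
    have hobj : ∑ x ∈ X, q x * Δ x ≤ ε := by
      have hsplit : ∑ x ∈ X, q x * Δ x
          = ∑ x ∈ X, w x * Δ x + ∑ x ∈ X, (if x = x₀ then L else 0) * Δ x := by
        rw [← Finset.sum_add_distrib]
        refine Finset.sum_congr rfl fun x _ => ?_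
        rw [hqdef]
        ring
      have hL0' : ∑ x ∈ X, (if x = x₀ then L else 0) * Δ x = 0 := by
        rw [show (fun x => (if x = x₀ then L else 0) * Δ x)
            = fun x => if x = x₀ then L * Δ x else 0 from
            funext fun x => by split_ifs <;> simp]
        rw [Finset.sum_ite_eq' X x₀ (fun x => L * Δ x), if_pos hx₀X, hx₀, mul_zero]
      have hwΔ : ∑ x ∈ X, w x * Δ x ≤ ε := by
        rw [← Finset.sum_attach X (fun x => w x * Δ x)]
        have hterm : ∀ i ∈ X.attach, w i.1 * Δ i.1 ≤ ε * p' i := by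
          intro i _
          rw [hwle i, div_mul_eq_mul_div, div_le_iff₀ (by positivity)]
          have h1 := hmε i.1
          have h2 := hmΔ i.1
          have h3 := hp'0 i
          have h4 := (hΔ i.1 i.2).1
          have h5 : ε * Δ i.1 ≤ m i.1 * m i.1 :=
            mul_le_mul h1 h2 h4 (le_of_lt (hmpos i.1))
          have h6 : 0 ≤ ε * p' i := mul_nonneg hεpos.le h3
          have h7 := mul_le_mul_of_nonneg_left h5 h6
          nlinarith [h7]
        calc ∑ i ∈ X.attach, w i.1 * Δ i.1 ≤ ∑ i ∈ X.attach, ε * p' i :=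
              Finset.sum_le_sum hterm
          _ = ε * ∑ i ∈ X.attach, p' i := by rw [Finset.mul_sum]
          _ = ε := by rw [hp'1, mul_one]
      rw [hsplit, hL0']
      linarith
    have hεle : ε ≤ ((d:ℝ) * β + 1) / Real.sqrt t := by
      rw [hεdef, Real.sqrt_div (by positivity) t]
      have hnum : Real.sqrt ((d:ℝ)*β) ≤ (d:ℝ)*β + 1 := by
        nlinarith [Real.sq_sqrt (show (0:ℝ) ≤ (d:ℝ)*β by positivity),
          Real.sqrt_nonneg ((d:ℝ)*β), sq_nonneg (Real.sqrt ((d:ℝ)*β) - 1)]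
      gcongr
    calc ∑ x ∈ X, p x * Δ x ≤ ∑ x ∈ X, q x * Δ x := hle
      _ ≤ ε := hobj
      _ ≤ ((d:ℝ) * β + 1) / Real.sqrt t := hεle
end

section
/- Let X be a finite subset of ℝ^d, let p be a distribution on X such that S(p) = Σ_{x∈X} p_x x xᵀ is invertible, and let x̂ ∈ X satisfy p_{x̂} ≥ 1/2. Then x̂ᵀ S(p)^{-1} x̂ ≤ 2. -/
open Finset

lemma quad_expand {d : ℕ} (X : Finset (Fin d → ℝ)) (p : (Fin d → ℝ) → ℝ)
    (v : Fin d → ℝ) :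
    dotProduct v ((Smat X p).mulVec v)
      = ∑ x ∈ X, p x * (dotProduct x v)^2 := by
  rw [Smat, show (∑ x ∈ X, p x • Matrix.vecMulVec x x).mulVec v
      = ∑ x ∈ X, (p x • Matrix.vecMulVec x x).mulVec v from
    map_sum (Matrix.mulVec.addMonoidHomLeft v) _ _]
  rw [show dotProduct v (∑ x ∈ X, (p x • Matrix.vecMulVec x x).mulVec v)
      = ∑ x ∈ X, dotProduct v ((p x • Matrix.vecMulVec x x).mulVec v) by
    simp [dotProduct, Finset.sum_apply, Finset.mul_sum]
    exact Finset.sum_comm]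
  refine Finset.sum_congr rfl fun x _ => ?_
  rw [Matrix.smul_mulVec, dotProduct_smul]
  have : (Matrix.vecMulVec x x).mulVec v = (dotProduct x v) • x := by
    ext i
    simp [Matrix.mulVec, Matrix.vecMulVec_apply, dotProduct, Finset.mul_sum, mul_assoc]
    rw [Finset.sum_mul]
    exact Finset.sum_congr rfl fun j _ => by ring
  rw [this, dotProduct_smul, dotProduct_comm]
  simp [pow_two, smul_eq_mul]

/-- if `p` is a distribution on `X` with `S(p)` invertible and
`p_{x̂} ≥ 1/2`, then `x̂ᵀ S(p)⁻¹ x̂ ≤ 2`. -/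
theorem quad_form_le_two_of_half_mass {d : ℕ} (X : Finset (Fin d → ℝ))
    (p : (Fin d → ℝ) → ℝ) (hp : IsDistOn X p) (hpu : IsUnit (Smat X p))
    (xhat : Fin d → ℝ) (hxhat : xhat ∈ X) (hhalf : 1 / 2 ≤ p xhat) :
    dotProduct xhat ((Smat X p)⁻¹.mulVec xhat) ≤ 2 := by
  set S := Smat X p with hS
  set v := S⁻¹.mulVec xhat with hv
  set q := dotProduct xhat v with hq
  have hdet : IsUnit S.det := (Matrix.isUnit_iff_isUnit_det S).mp hpu
  have hSv : S.mulVec v = xhat := by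
    rw [hv, Matrix.mulVec_mulVec, Matrix.mul_nonsing_inv _ hdet, Matrix.one_mulVec]
  have key : dotProduct v (S.mulVec v) = ∑ x ∈ X, p x * (dotProduct x v)^2 :=
    quad_expand X p v
  have h1 : dotProduct v (S.mulVec v) = q := by
    rw [hSv, dotProduct_comm, hq]
  have h2 : p xhat * q^2 ≤ ∑ x ∈ X, p x * (dotProduct x v)^2 := by
    refine Finset.single_le_sum (f := fun x => p x * (dotProduct x v)^2) (fun x hx => ?_) hxhat
    exact mul_nonneg (hp.1 x hx) (sq_nonneg _)
  rw [key] at h1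
  nlinarith [sq_nonneg q]
end

section
/- Let G_1, …, G_S be symmetric positive definite d×d real matrices and let G = G_1 + ⋯ + G_S. Let x ∈ ℝ^d, let Δ ∈ ℝ, let U > 0, and set V = U/S. If xᵀ G^{-1} x ≥ Δ²/(2U), then there exists i ∈ {1, …, S} such that xᵀ G_i^{-1} x ≥ Δ²/(2V). -/
open Matrix

lemma dotProduct_finsum {d S : ℕ} (u : Fin d → ℝ) (f : Fin S → (Fin d → ℝ)) :
    u ⬝ᵥ (∑ i, f i) = ∑ i, u ⬝ᵥ f i := by
  simp [dotProduct, Finset.sum_apply, Finset.mul_sum]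
  exact Finset.sum_comm

/-- Symmetry of a real quadratic/bilinear form given by a Hermitian matrix. -/
lemma dot_mulVec_symm {d : ℕ} {M : Matrix (Fin d) (Fin d) ℝ} (hM : M.IsHermitian)
    (u v : Fin d → ℝ) : u ⬝ᵥ M.mulVec v = v ⬝ᵥ M.mulVec u := by
  rw [Matrix.dotProduct_mulVec, ← Matrix.mulVec_transpose]
  have hMt : Mᵀ = M := by
    have := hM.eq
    simpa [Matrix.conjTranspose_eq_transpose_of_trivial] using this
  rw [hMt, dotProduct_comm]

/-- Cauchy–Schwarz for the bilinear form of a positive definite matrix. -/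
lemma posDef_cauchy_schwarz {d : ℕ} {M : Matrix (Fin d) (Fin d) ℝ} (hM : M.PosDef)
    (u v : Fin d → ℝ) :
    (u ⬝ᵥ M.mulVec v) ^ 2 ≤ (u ⬝ᵥ M.mulVec u) * (v ⬝ᵥ M.mulVec v) := by
  rcases eq_or_ne u 0 with rfl | hu
  · simp
  · have hp : 0 < u ⬝ᵥ M.mulVec u := by simpa using hM.dotProduct_mulVec_pos hu
    set p := u ⬝ᵥ M.mulVec u with hpdef
    set q := u ⬝ᵥ M.mulVec v with hqdef
    set r := v ⬝ᵥ M.mulVec v with hrdef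
    have key : 0 ≤ (p • v - q • u) ⬝ᵥ M.mulVec (p • v - q • u) := by
      simpa using hM.posSemidef.dotProduct_mulVec_nonneg (p • v - q • u)
    have hsym : v ⬝ᵥ M.mulVec u = q := (dot_mulVec_symm hM.1 v u).trans rfl
    have hexp : (p • v - q • u) ⬝ᵥ M.mulVec (p • v - q • u)
        = p * (p * r) - p * (q * q) - (q * (p * q) - q * (q * p)) := by
      rw [Matrix.mulVec_sub, Matrix.mulVec_smul, Matrix.mulVec_smul]
      simp [sub_dotProduct, dotProduct_sub, smul_dotProduct,
        dotProduct_smul, hsym, ← hpdef, ← hqdef, ← hrdef, smul_eq_mul]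
      ring
    rw [hexp] at key
    nlinarith [hp, key]

/-- if `G = G_1 + ⋯ + G_S` with each `G_i` symmetric positive definite and
`xᵀ G⁻¹ x ≥ Δ²/(2U)`, then some `i` satisfies `xᵀ G_i⁻¹ x ≥ Δ²/(2V)` where `V = U/S`. -/
theorem exists_block_with_large_inverse_quad_form {d S : ℕ} (hS : 0 < S)
    (G : Fin S → Matrix (Fin d) (Fin d) ℝ) (hG : ∀ i, (G i).PosDef)
    (x : Fin d → ℝ) (Δ U : ℝ) (hU : 0 < U)
    (h : Δ ^ 2 / (2 * U) ≤ dotProduct x ((∑ i, G i)⁻¹.mulVec x)) :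
    ∃ i : Fin S, Δ ^ 2 / (2 * (U / S)) ≤ dotProduct x ((G i)⁻¹.mulVec x) := by
  have hne : Nonempty (Fin S) := Fin.pos_iff_nonempty.mp hS
  set Gs := ∑ i, G i with hGsdef
  have hsumv : ∀ v : Fin d → ℝ, Gs.mulVec v = ∑ i, (G i).mulVec v := by
    intro v
    ext j
    simp [hGsdef, Matrix.mulVec, dotProduct, Matrix.sum_apply, Finset.sum_mul]
    rw [Finset.sum_comm]
  have hGs : Gs.PosDef := by
    refine Matrix.PosDef.of_dotProduct_mulVec_pos ?_ ?_
    · have : Gsᴴ = Gs := by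
        rw [hGsdef, Matrix.conjTranspose_sum]
        exact Finset.sum_congr rfl fun i _ => (hG i).1
      exact this
    · intro v hv
      have : (0:ℝ) < ∑ i, v ⬝ᵥ (G i).mulVec v :=
        Finset.sum_pos (fun i _ => by simpa using (hG i).dotProduct_mulVec_pos hv) Finset.univ_nonempty
      simpa [hsumv, dotProduct_finsum] using this
  set y := Gs⁻¹.mulVec x with hydef
  have hGsy : Gs.mulVec y = x := by
    rw [hydef, Matrix.mulVec_mulVec, Matrix.mul_nonsing_inv _ (isUnit_iff_ne_zero.mpr hGs.det_pos.ne'),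
      Matrix.one_mulVec]
  set t := x ⬝ᵥ y with htdef
  have ht : t = ∑ i, y ⬝ᵥ (G i).mulVec y := by
    rw [htdef, dotProduct_comm, ← hGsy, hsumv, dotProduct_finsum]
  have hh : Δ ^ 2 / (2 * U) ≤ t := h
  have hSR : (0:ℝ) < (S:ℝ) := Nat.cast_pos.mpr hS
  have hgoal_eq : Δ ^ 2 / (2 * (U / S)) = (S:ℝ) * (Δ ^ 2 / (2 * U)) := by
    field_simp
  rcases le_or_gt t 0 with ht0 | ht0
  · -- then Δ = 0 and any i works since (G i)⁻¹ is PSD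
    have hΔ : Δ ^ 2 ≤ 0 := by
      have h2U : (0:ℝ) < 2 * U := by linarith
      have h1 : Δ ^ 2 / (2 * U) ≤ 0 := le_trans hh ht0
      have := (div_le_iff₀ h2U).mp h1
      linarith
    have hΔ0 : Δ ^ 2 = 0 := le_antisymm hΔ (sq_nonneg Δ)
    refine ⟨⟨0, hS⟩, ?_⟩
    rw [hΔ0, zero_div]
    simpa using ((hG ⟨0, hS⟩).inv).posSemidef.dotProduct_mulVec_nonneg x
  · -- pigeonhole: some block has small quadratic form
    have hy0 : y ≠ 0 := by
      intro hy
      rw [htdef, hy, dotProduct_zero] at ht0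
      exact lt_irrefl _ ht0
    have hapos : ∀ i, 0 < y ⬝ᵥ (G i).mulVec y := fun i => by simpa using (hG i).dotProduct_mulVec_pos hy0
    have hpig : ∃ i : Fin S, y ⬝ᵥ (G i).mulVec y ≤ t / S := by
      by_contra hc
      push_neg at hc
      have : t < ∑ i, y ⬝ᵥ (G i).mulVec y := by
        calc t = ∑ _i : Fin S, t / S := by
              rw [Finset.sum_const, Finset.card_univ, Fintype.card_fin, nsmul_eq_mul]
              field_simp
          _ < ∑ i, y ⬝ᵥ (G i).mulVec y :=
              Finset.sum_lt_sum_of_nonempty Finset.univ_nonempty fun i _ => hc i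
      rw [← ht] at this
      exact lt_irrefl _ this
    obtain ⟨i, hi⟩ := hpig
    refine ⟨i, ?_⟩
    set a := y ⬝ᵥ (G i).mulVec y with hadef
    have hai : 0 < a := hapos i
    set Q := x ⬝ᵥ (G i)⁻¹.mulVec x with hQdef
    -- Cauchy–Schwarz with u = y, v = (G i)⁻¹ x
    have hinv : (G i).mulVec ((G i)⁻¹.mulVec x) = x := by
      rw [Matrix.mulVec_mulVec, Matrix.mul_nonsing_inv _ (isUnit_iff_ne_zero.mpr (hG i).det_pos.ne'),
        Matrix.one_mulVec]
    have hq : y ⬝ᵥ (G i).mulVec ((G i)⁻¹.mulVec x) = t := by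
      rw [hinv, dotProduct_comm]
    have hr : ((G i)⁻¹.mulVec x) ⬝ᵥ (G i).mulVec ((G i)⁻¹.mulVec x) = Q := by
      rw [hinv, dotProduct_comm]
    have hcs := posDef_cauchy_schwarz (hG i) y ((G i)⁻¹.mulVec x)
    rw [hq, hr] at hcs
    -- now: t^2 ≤ a * Q, a ≤ t/S, 0 < a, so S*t ≤ Q
    have hSt : (S:ℝ) * t ≤ Q := by
      have h1 : a * ((S:ℝ) * t) ≤ t ^ 2 := by
        have := mul_le_mul_of_nonneg_left hi (le_of_lt hSR)
        have h2 : (S:ℝ) * (t / S) = t := by field_simp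
        nlinarith [hai, ht0]
      nlinarith [hcs, hai]
    rw [hgoal_eq]
    calc (S:ℝ) * (Δ ^ 2 / (2 * U)) ≤ (S:ℝ) * t := by
          exact mul_le_mul_of_nonneg_left hh (le_of_lt hSR)
      _ ≤ Q := hSt
end

section
/- For all real numbers p, q ∈ [−3/4, 3/4], the Kullback–Leibler divergence kl(p, q) = (1/2)(1 + p)·ln((1 + p)/(1 + q)) + (1/2)(1 − p)·ln((1 − p)/(1 − q)) between the distribution on {−1, +1} with mean p and the distribution on {−1, +1} with mean q satisfies kl(p, q) ≤ 2(p − q)². -/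
open Real Set

lemma log_le_half (x : ℝ) (hx : 1 ≤ x) : Real.log x ≤ (x^2 - 1) / (2*x) := by
  have h := monotoneOn_of_hasDerivWithinAt_nonneg (D := Set.Ici (1:ℝ)) (convex_Ici 1)
    (f := fun t => (t^2 - 1) / (2*t) - Real.log t)
    (f' := fun t => (t-1)^2/(2*t^2))
    ?_ ?_ ?_
  · have := h (Set.self_mem_Ici) (Set.mem_Ici.mpr hx) hx
    simp only at this
    have h1 : ((1:ℝ)^2 - 1)/(2*1) - Real.log 1 = 0 := by simp
    linarith [this, h1.symm ▸ this]
  · apply ContinuousOn.sub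
    · apply ContinuousOn.div (by fun_prop) (by fun_prop)
      intro t ht; simp only [Set.mem_Ici] at ht; positivity
    · apply Real.continuousOn_log.mono
      intro t ht; simp only [Set.mem_Ici] at ht
      simp only [Set.mem_compl_iff, Set.mem_singleton_iff]; positivity
  · intro t ht
    rw [interior_Ici] at ht
    have ht0 : (0:ℝ) < t := lt_trans one_pos ht
    have hd : HasDerivAt (fun t : ℝ => (t^2 - 1) / (2*t) - Real.log t)
        ((2*t*(2*t) - (t^2-1)*2)/(2*t)^2 - 1/t) t := by
      exact ((((hasDerivAt_pow 2 t).sub_const 1).div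
        ((hasDerivAt_id t).const_mul 2) (by positivity)).sub (Real.hasDerivAt_log (ne_of_gt ht0))).congr_deriv
        (by simp only [id_eq]; field_simp; try ring)
    have heq : (2*t*(2*t) - (t^2-1)*2)/(2*t)^2 - 1/t = (t-1)^2/(2*t^2) := by
      field_simp; ring
    rw [heq] at hd
    exact hd.hasDerivWithinAt
  · intro t ht
    rw [interior_Ici] at ht
    have ht0 : (0:ℝ) < t := lt_trans one_pos ht
    positivity

lemma log_le_harm (x : ℝ) (hx0 : 0 < x) (hx : x ≤ 1) : Real.log x ≤ 2*(x - 1) / (x + 1) := by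
  have h := antitoneOn_of_hasDerivWithinAt_nonpos (D := Set.Ioc (0:ℝ) 1) (convex_Ioc 0 1)
    (f := fun t => 2*(t - 1) / (t + 1) - Real.log t)
    (f' := fun t => -((t-1)^2/(t*(t+1)^2)))
    ?_ ?_ ?_
  · have := h (Set.mem_Ioc.mpr ⟨hx0, hx⟩) (Set.mem_Ioc.mpr ⟨one_pos, le_refl 1⟩) hx
    simp only [Real.log_one] at this
    have h1 : (2*((1:ℝ) - 1)/(1 + 1) - 0 : ℝ) = 0 := by norm_num
    linarith
  · apply ContinuousOn.sub
    · apply ContinuousOn.div (by fun_prop) (by fun_prop)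
      intro t ht; simp only [Set.mem_Ioc] at ht
      exact ne_of_gt (by linarith [ht.1] : (0:ℝ) < t + 1)
    · apply Real.continuousOn_log.mono
      intro t ht; simp only [Set.mem_Ioc] at ht
      simp only [Set.mem_compl_iff, Set.mem_singleton_iff]
      exact ne_of_gt ht.1
  · intro t ht
    rw [interior_Ioc] at ht
    obtain ⟨ht0, ht1⟩ := ht
    have hd : HasDerivAt (fun t : ℝ => 2*(t - 1) / (t + 1) - Real.log t)
        (-((t-1)^2/(t*(t+1)^2))) t := by
      have := (((hasDerivAt_id t).sub_const 1).const_mul 2).div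
        ((hasDerivAt_id t).add_const 1) (by positivity)
      have h2 := this.sub (Real.hasDerivAt_log (ne_of_gt ht0))
      exact h2.congr_deriv (by simp only [id_eq]; field_simp; ring)
    exact hd.hasDerivWithinAt
  · intro t ht
    rw [interior_Ioc] at ht
    obtain ⟨ht0, ht1⟩ := ht
    have : (0:ℝ) ≤ (t-1)^2/(t*(t+1)^2) := by positivity
    linarith

lemma kl_aux (p q : ℝ) (hp1 : -(3 / 4) ≤ p) (hp2 : p ≤ 3 / 4)
    (hq1 : -(3 / 4) ≤ q) (hq2 : q ≤ 3 / 4) (hpq : q ≤ p) :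
    1 / 2 * (1 + p) * Real.log ((1 + p) / (1 + q))
        + 1 / 2 * (1 - p) * Real.log ((1 - p) / (1 - q))
      ≤ 2 * (p - q) ^ 2 := by
  have hA : (0:ℝ) < 1 + p := by linarith
  have hB : (0:ℝ) < 1 + q := by linarith
  have hC : (0:ℝ) < 1 - p := by linarith
  have hD : (0:ℝ) < 1 - q := by linarith
  have hE : (0:ℝ) < 2 - p - q := by linarith
  -- bound on first log
  have hx1 : (1:ℝ) ≤ (1 + p) / (1 + q) := (one_le_div hB).mpr (by linarith)
  have hb1 : Real.log ((1 + p) / (1 + q))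
      ≤ ((1+p)^2 - (1+q)^2) / (2*(1+p)*(1+q)) := by
    have e1 : (((1+p)/(1+q))^2 - 1) / (2*((1+p)/(1+q)))
        = ((1+p)^2 - (1+q)^2) / (2*(1+p)*(1+q)) := by
      field_simp
    exact (log_le_half _ hx1).trans_eq e1
  -- bound on second log
  have hx2pos : (0:ℝ) < (1 - p) / (1 - q) := by positivity
  have hx2 : (1 - p) / (1 - q) ≤ 1 := (div_le_one hD).mpr (by linarith)
  have hb2 : Real.log ((1 - p) / (1 - q)) ≤ 2*(q - p) / (2 - p - q) := by
    have e2 : 2*((1-p)/(1-q) - 1) / ((1-p)/(1-q) + 1) = 2*(q-p)/(2-p-q) := by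
      rw [show (1-p)/(1-q) - 1 = (q-p)/(1-q) from by field_simp; ring,
        show (1-p)/(1-q) + 1 = (2-p-q)/(1-q) from by field_simp; ring,
        mul_div_assoc, div_div_div_cancel_right₀ hD.ne']
      ring
    exact (log_le_harm _ hx2pos hx2).trans_eq e2
  have step : 1 / 2 * (1 + p) * Real.log ((1 + p) / (1 + q))
        + 1 / 2 * (1 - p) * Real.log ((1 - p) / (1 - q))
      ≤ 1 / 2 * (1 + p) * (((1+p)^2 - (1+q)^2) / (2*(1+p)*(1+q)))
        + 1 / 2 * (1 - p) * (2*(q - p) / (2 - p - q)) := by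
    gcongr <;> positivity
  refine step.trans ?_
  have e3 : 1 / 2 * (1 + p) * (((1+p)^2 - (1+q)^2) / (2*(1+p)*(1+q)))
      = ((1+p)^2 - (1+q)^2) / (4*(1+q)) := by
    field_simp; ring
  have e4 : 1 / 2 * (1 - p) * (2*(q - p) / (2 - p - q))
      = (1-p)*(q-p) / (2 - p - q) := by
    field_simp
  rw [e3, e4]
  have hscal : 4 - (p - q) ≤ 8*(1+q)*(2-p-q) := by
    nlinarith [mul_nonneg (by linarith : (0:ℝ) ≤ 3/4 - p) (by linarith : (0:ℝ) ≤ 7 + 8*q),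
      mul_nonneg (by linarith : (0:ℝ) ≤ 3/4 - q) (by linarith : (0:ℝ) ≤ 3/4 + q)]
  have hmain : (p-q)^2*(4 - (p-q)) ≤ (p-q)^2*(8*(1+q)*(2-p-q)) :=
    mul_le_mul_of_nonneg_left hscal (sq_nonneg _)
  rw [div_add_div _ _ (by positivity) hE.ne', div_le_iff₀ (by positivity)]
  nlinarith [hmain]

/-- for `p, q ∈ [−3/4, 3/4]`, the KL divergence between the `{−1, +1}`-valued
distributions with means `p` and `q` satisfies `kl(p, q) ≤ 2(p − q)²`. -/
theorem kl_le_two_sq_diff (p q : ℝ) (hp1 : -(3 / 4) ≤ p) (hp2 : p ≤ 3 / 4)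
    (hq1 : -(3 / 4) ≤ q) (hq2 : q ≤ 3 / 4) :
    1 / 2 * (1 + p) * Real.log ((1 + p) / (1 + q))
        + 1 / 2 * (1 - p) * Real.log ((1 - p) / (1 - q))
      ≤ 2 * (p - q) ^ 2 := by
  rcases le_total q p with h | h
  · exact kl_aux p q hp1 hp2 hq1 hq2 h
  · have h2 := kl_aux (-p) (-q) (by linarith) (by linarith) (by linarith) (by linarith)
      (by linarith)
    rw [show (1 + -p : ℝ) = 1 - p from by ring, show (1 - -p : ℝ) = 1 + p from by ring,
      show (1 + -q : ℝ) = 1 - q from by ring, show (1 - -q : ℝ) = 1 + q from by ring,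
      show ((-p) - -q : ℝ)^2 = (p - q)^2 from by ring] at h2
    linarith
end
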